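/- Let θ_1, θ_2, θ_3 : ℝ → ℝ be a solution of the identical Kuramoto model for N = 3, let Δ_1 = θ_1 − θ_2, Δ_2 = θ_2 − θ_3, Δ_3 = θ_3 − θ_1, and suppose that on an interval [0, T] all the quantities sin(Δ_j(t)/2) for j=1,2,3 and sin((Δ_j(t)−Δ_k(t))/2) for j≠k are nonzero. Define ψ_amp(t) = |ψ_1(t)·ψ_2(t)·ψ_3(t)|^{1/3}, where ψ_1, ψ_2, ψ_3 are the Koopman eigenfunctions. Then for all t ∈ [0, T], ψ_amp(t) = e^{−K·t}·ψ_amp(0); in particular, if K > 0 then ψ_amp is nonincreasing on [0, T]. -/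

import Mathlib

private lemma keyab (ω K a b : ℝ) :
    (-K * Real.sin a ^ 3) * (Real.sin (a - b) * Real.sin (-(2*a + b))) ^ 2 =
    (3 * Real.sin a ^ 2 *
        (Real.cos a * (((ω + K / 3 * (Real.sin 0 + Real.sin (-(2*a)) + Real.sin (-(2*a + 2*b)))) - (ω + K / 3 * (Real.sin (2*a) + Real.sin 0 + Real.sin (-(2*b))))) / 2)) *
        (Real.sin (a - b) * Real.sin (-(2*a + b))) -
      Real.sin a ^ 3 *
        (Real.cos (a - b) * ((((ω + K / 3 * (Real.sin 0 + Real.sin (-(2*a)) + Real.sin (-(2*a + 2*b)))) - (ω + K / 3 * (Real.sin (2*a) + Real.sin 0 + Real.sin (-(2*b))))) - ((ω + K / 3 * (Real.sin (2*a) + Real.sin 0 + Real.sin (-(2*b)))) - (ω + K / 3 * (Real.sin (2*a + 2*b) + Real.sin (2*b) + Real.sin 0)))) / 2) *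
          Real.sin (-(2*a + b)) +
         Real.sin (a - b) *
          (Real.cos (-(2*a + b)) * ((((ω + K / 3 * (Real.sin (2*a + 2*b) + Real.sin (2*b) + Real.sin 0)) - (ω + K / 3 * (Real.sin 0 + Real.sin (-(2*a)) + Real.sin (-(2*a + 2*b))))) - ((ω + K / 3 * (Real.sin 0 + Real.sin (-(2*a)) + Real.sin (-(2*a + 2*b)))) - (ω + K / 3 * (Real.sin (2*a) + Real.sin 0 + Real.sin (-(2*b)))))) / 2)))) *
      (Real.sin (a - b) * Real.sin (-(2*a + b))) := by
  simp only [Real.sin_zero, Real.sin_neg, Real.cos_neg, Real.sin_add, Real.cos_add,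
    Real.sin_sub, Real.cos_sub, Real.sin_two_mul, Real.cos_two_mul]
  linear_combination ((2*K*(Real.sin a)^2*(Real.cos a)^3*(Real.sin b)^5*(Real.cos b) + -8*K*(Real.sin a)^2*(Real.cos a)^5*(Real.sin b)^5*(Real.cos b) + 8*K*(Real.sin a)^2*(Real.cos a)^7*(Real.sin b)^5*(Real.cos b) + 1*K*(Real.sin a)^3*(Real.cos a)^2*(Real.sin b)^4 + -4*K*(Real.sin a)^3*(Real.cos a)^2*(Real.sin b)^4*(Real.cos b)^2 + -4*K*(Real.sin a)^3*(Real.cos a)^4*(Real.sin b)^4 + 8*K*(Real.sin a)^3*(Real.cos a)^4*(Real.sin b)^4*(Real.cos b)^2 + 4*K*(Real.sin a)^3*(Real.cos a)^6*(Real.sin b)^4 + -1*K*(Real.sin a)^4*(Real.cos a)*(Real.sin b)^3*(Real.cos b) + 2*K*(Real.sin a)^4*(Real.cos a)*(Real.sin b)^3*(Real.cos b)^3 + 4*K*(Real.sin a)^4*(Real.cos a)^3*(Real.sin b)^3*(Real.cos b) + 4*K*(Real.sin a)^4*(Real.cos a)^3*(Real.sin b)^3*(Real.cos b)^3 + -4*K*(Real.sin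 a)^4*(Real.cos a)^3*(Real.sin b)^5*(Real.cos b) + 4*K*(Real.sin a)^4*(Real.cos a)^5*(Real.sin b)^3*(Real.cos b) + -16*K*(Real.sin a)^4*(Real.cos a)^5*(Real.sin b)^3*(Real.cos b)^3 + 4*K*(Real.sin a)^5*(Real.sin b)^2*(Real.cos b)^2 + -4*K*(Real.sin a)^5*(Real.sin b)^2*(Real.cos b)^4 + -4*K*(Real.sin a)^5*(Real.sin b)^4*(Real.cos b)^2 + 8*K*(Real.sin a)^5*(Real.cos a)^2*(Real.sin b)^2*(Real.cos b)^2 + -12*K*(Real.sin a)^5*(Real.cos a)^2*(Real.sin b)^2*(Real.cos b)^4 + -4*K*(Real.sin a)^5*(Real.cos a)^2*(Real.sin b)^4*(Real.cos b)^2 + -4*K*(Real.sin a)^5*(Real.cos a)^4*(Real.sin b)^2*(Real.cos b)^2 + -4*K*(Real.sin a)^6*(Real.cos a)*(Real.sin b)*(Real.cos b)^3 + 4*K*(Real.sin a)^6*(Real.cos a)*(Real.sin b)*(Real.cos b)^5 + -4*K*(Real.sin a)^6*(Real.cos a)*(Real.sin b)^3*(Real.cos b) + 8*K*(Real.sin a)^6*(Real.cos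 a)*(Real.sin b)^3*(Real.cos b)^3 + 4*K*(Real.sin a)^6*(Real.cos a)*(Real.sin b)^5*(Real.cos b) + -4*K*(Real.sin a)^6*(Real.cos a)^3*(Real.sin b)*(Real.cos b)^3 + 8*K*(Real.sin a)^6*(Real.cos a)^3*(Real.sin b)*(Real.cos b)^5 + -4*K*(Real.sin a)^7*(Real.cos b)^4 + 4*K*(Real.sin a)^7*(Real.cos b)^6 + -4*K*(Real.sin a)^7*(Real.sin b)^2*(Real.cos b)^2 + 8*K*(Real.sin a)^7*(Real.sin b)^2*(Real.cos b)^4 + 4*K*(Real.sin a)^7*(Real.sin b)^4*(Real.cos b)^2)) * Real.sin_sq_add_cos_sq a + ((-1*K*(Real.sin a)^4*(Real.cos a)*(Real.sin b)^3*(Real.cos b) + -3*K*(Real.sin a)^5*(Real.sin b)^2*(Real.cos b)^2 + 4*K*(Real.sin a)^6*(Real.cos a)*(Real.sin b)^3*(Real.cos b) + 4*K*(Real.sin a)^7*(Real.cos b)^4 + 8*K*(Real.sin a)^7*(Real.sin b)^2*(Real.cos b)^2 + -4*K*(Real.sin a)^8*(Real.cos a)*(Real.sin b)*(Real.cos b)^3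 + -4*K*(Real.sin a)^8*(Real.cos a)*(Real.sin b)^3*(Real.cos b) + -4*K*(Real.sin a)^9*(Real.cos b)^4 + -4*K*(Real.sin a)^9*(Real.sin b)^2*(Real.cos b)^2)) * Real.sin_sq_add_cos_sq b

private lemma hasDerivAt_of_eq {f : ℝ → ℝ} {d e t : ℝ} (hd : HasDerivAt f d t)
    (he : d = e) : HasDerivAt f e t := he ▸ hd

private lemma psi_step (ω K : ℝ) (f g h : ℝ → ℝ) (t : ℝ)
    (hf : HasDerivAt f (ω + K / 3 * (Real.sin (f t - f t) + Real.sin (g t - f t) + Real.sin (h t - f t))) t)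
    (hg : HasDerivAt g (ω + K / 3 * (Real.sin (f t - g t) + Real.sin (g t - g t) + Real.sin (h t - g t))) t)
    (hh : HasDerivAt h (ω + K / 3 * (Real.sin (f t - h t) + Real.sin (g t - h t) + Real.sin (h t - h t))) t)
    (hu : Real.sin ((f t - g t - (g t - h t)) / 2) ≠ 0)
    (hv : Real.sin ((h t - f t - (f t - g t)) / 2) ≠ 0) :
    HasDerivAt (fun s => Real.sin ((f s - g s) / 2) ^ 3 /
        (Real.sin ((f s - g s - (g s - h s)) / 2) * Real.sin ((h s - f s - (f s - g s)) / 2)))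
      (-K * (Real.sin ((f t - g t) / 2) ^ 3 /
        (Real.sin ((f t - g t - (g t - h t)) / 2) * Real.sin ((h t - f t - (f t - g t)) / 2)))) t := by
  have hN := (((hf.sub hg).div_const 2).sin).pow 3
  have hU := (((hf.sub hg).sub (hg.sub hh)).div_const 2).sin
  have hV := (((hh.sub hf).sub (hf.sub hg)).div_const 2).sin
  have hD := hU.mul hV
  exact hasDerivAt_of_eq (hN.div hD (mul_ne_zero hu hv)) (by
    simp only [Pi.sub_apply, Pi.pow_apply, Pi.mul_apply, Nat.cast_ofNat]
    set x := f t with hxd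
    set y := g t with hyd
    set z := h t with hzd
    set a := (x - y) / 2 with ha
    set b := (y - z) / 2 with hb
    have hu' : Real.sin (a - b) ≠ 0 := by
      rw [show a - b = (x - y - (y - z)) / 2 by rw [ha, hb]; ring]; exact hu
    have hv' : Real.sin (-(2*a + b)) ≠ 0 := by
      rw [show -(2*a + b) = (z - x - (x - y)) / 2 by rw [ha, hb]; ring]; exact hv
    rw [show (x - y - (y - z)) / 2 = a - b by rw [ha, hb]; ring,
        show (z - x - (x - y)) / 2 = -(2*a + b) by rw [ha, hb]; ring,
        show y - x = -(2*a) by rw [ha]; ring,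
        show z - x = -(2*a + 2*b) by rw [ha, hb]; ring,
        show z - y = -(2*b) by rw [hb]; ring,
        show x - z = 2*a + 2*b by rw [ha, hb]; ring,
        show x - y = 2*a by rw [ha]; ring,
        show y - z = 2*b by rw [hb]; ring,
        sub_self, sub_self, sub_self]
    conv_rhs => rw [← mul_div_assoc]
    rw [div_eq_div_iff (pow_ne_zero 2 (mul_ne_zero hu' hv')) (mul_ne_zero hu' hv')]
    linear_combination (-1 : ℝ) * keyab ω K a b)

theorem koopman_amplitude_decay
    (ω K T : ℝ) (θ1 θ2 θ3 : ℝ → ℝ)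
    (h1 : ∀ t : ℝ, HasDerivAt θ1
      (ω + K / 3 * (Real.sin (θ1 t - θ1 t) + Real.sin (θ2 t - θ1 t) + Real.sin (θ3 t - θ1 t))) t)
    (h2 : ∀ t : ℝ, HasDerivAt θ2
      (ω + K / 3 * (Real.sin (θ1 t - θ2 t) + Real.sin (θ2 t - θ2 t) + Real.sin (θ3 t - θ2 t))) t)
    (h3 : ∀ t : ℝ, HasDerivAt θ3
      (ω + K / 3 * (Real.sin (θ1 t - θ3 t) + Real.sin (θ2 t - θ3 t) + Real.sin (θ3 t - θ3 t))) t)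
    (Δ1 Δ2 Δ3 : ℝ → ℝ)
    (hΔ1 : ∀ t, Δ1 t = θ1 t - θ2 t)
    (hΔ2 : ∀ t, Δ2 t = θ2 t - θ3 t)
    (hΔ3 : ∀ t, Δ3 t = θ3 t - θ1 t)
    (hreg : ∀ t ∈ Set.Icc (0 : ℝ) T,
      Real.sin (Δ1 t / 2) ≠ 0 ∧ Real.sin (Δ2 t / 2) ≠ 0 ∧ Real.sin (Δ3 t / 2) ≠ 0 ∧
      Real.sin ((Δ1 t - Δ2 t) / 2) ≠ 0 ∧ Real.sin ((Δ2 t - Δ3 t) / 2) ≠ 0 ∧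
      Real.sin ((Δ3 t - Δ1 t) / 2) ≠ 0)
    (ψ1 ψ2 ψ3 ψamp : ℝ → ℝ)
    (hψ1 : ∀ t, ψ1 t = Real.sin (Δ1 t / 2) ^ 3
      / (Real.sin ((Δ1 t - Δ2 t) / 2) * Real.sin ((Δ3 t - Δ1 t) / 2)))
    (hψ2 : ∀ t, ψ2 t = Real.sin (Δ2 t / 2) ^ 3
      / (Real.sin ((Δ2 t - Δ3 t) / 2) * Real.sin ((Δ1 t - Δ2 t) / 2)))
    (hψ3 : ∀ t, ψ3 t = Real.sin (Δ3 t / 2) ^ 3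
      / (Real.sin ((Δ3 t - Δ1 t) / 2) * Real.sin ((Δ2 t - Δ3 t) / 2)))
    (hψamp : ∀ t, ψamp t = |ψ1 t * ψ2 t * ψ3 t| ^ ((1 : ℝ) / 3)) :
    (∀ t ∈ Set.Icc (0 : ℝ) T, ψamp t = Real.exp (-K * t) * ψamp 0) ∧
    (0 < K → AntitoneOn ψamp (Set.Icc (0 : ℝ) T)) := by
  -- derivative of each eigenfunction
  have hd1 : ∀ t ∈ Set.Icc (0 : ℝ) T, HasDerivAt ψ1 (-K * ψ1 t) t := by
    intro t ht
    have e1 : ψ1 = fun s => Real.sin ((θ1 s - θ2 s) / 2) ^ 3 /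
        (Real.sin ((θ1 s - θ2 s - (θ2 s - θ3 s)) / 2) *
          Real.sin ((θ3 s - θ1 s - (θ1 s - θ2 s)) / 2)) :=
      funext fun s => by rw [hψ1 s, hΔ1 s, hΔ2 s, hΔ3 s]
    rw [e1]
    refine psi_step ω K θ1 θ2 θ3 t (h1 t) (h2 t) (h3 t) ?_ ?_
    · rw [show θ1 t - θ2 t - (θ2 t - θ3 t) = Δ1 t - Δ2 t by rw [hΔ1 t, hΔ2 t]]
      exact (hreg t ht).2.2.2.1
    · rw [show θ3 t - θ1 t - (θ1 t - θ2 t) = Δ3 t - Δ1 t by rw [hΔ1 t, hΔ3 t]]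
      exact (hreg t ht).2.2.2.2.2
  have hd2 : ∀ t ∈ Set.Icc (0 : ℝ) T, HasDerivAt ψ2 (-K * ψ2 t) t := by
    intro t ht
    have e2 : ψ2 = fun s => Real.sin ((θ2 s - θ3 s) / 2) ^ 3 /
        (Real.sin ((θ2 s - θ3 s - (θ3 s - θ1 s)) / 2) *
          Real.sin ((θ1 s - θ2 s - (θ2 s - θ3 s)) / 2)) :=
      funext fun s => by rw [hψ2 s, hΔ1 s, hΔ2 s, hΔ3 s]
    rw [e2]
    refine psi_step ω K θ2 θ3 θ1 t (hasDerivAt_of_eq (h2 t) (by ring))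
      (hasDerivAt_of_eq (h3 t) (by ring)) (hasDerivAt_of_eq (h1 t) (by ring)) ?_ ?_
    · rw [show θ2 t - θ3 t - (θ3 t - θ1 t) = Δ2 t - Δ3 t by rw [hΔ2 t, hΔ3 t]]
      exact (hreg t ht).2.2.2.2.1
    · rw [show θ1 t - θ2 t - (θ2 t - θ3 t) = Δ1 t - Δ2 t by rw [hΔ1 t, hΔ2 t]]
      exact (hreg t ht).2.2.2.1
  have hd3 : ∀ t ∈ Set.Icc (0 : ℝ) T, HasDerivAt ψ3 (-K * ψ3 t) t := by
    intro t ht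
    have e3 : ψ3 = fun s => Real.sin ((θ3 s - θ1 s) / 2) ^ 3 /
        (Real.sin ((θ3 s - θ1 s - (θ1 s - θ2 s)) / 2) *
          Real.sin ((θ2 s - θ3 s - (θ3 s - θ1 s)) / 2)) :=
      funext fun s => by rw [hψ3 s, hΔ1 s, hΔ2 s, hΔ3 s]
    rw [e3]
    refine psi_step ω K θ3 θ1 θ2 t (hasDerivAt_of_eq (h3 t) (by ring))
      (hasDerivAt_of_eq (h1 t) (by ring)) (hasDerivAt_of_eq (h2 t) (by ring)) ?_ ?_
    · rw [show θ3 t - θ1 t - (θ1 t - θ2 t) = Δ3 t - Δ1 t by rw [hΔ1 t, hΔ3 t]]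
      exact (hreg t ht).2.2.2.2.2
    · rw [show θ2 t - θ3 t - (θ3 t - θ1 t) = Δ2 t - Δ3 t by rw [hΔ2 t, hΔ3 t]]
      exact (hreg t ht).2.2.2.2.1
  -- the product satisfies P' = -3K P
  have hPd : ∀ t ∈ Set.Icc (0 : ℝ) T,
      HasDerivAt (fun s => ψ1 s * ψ2 s * ψ3 s) (-(3*K) * (ψ1 t * ψ2 t * ψ3 t)) t := by
    intro t ht
    exact hasDerivAt_of_eq (((hd1 t ht).mul (hd2 t ht)).mul (hd3 t ht)) (by simp only [Pi.mul_apply]; ring)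
  -- exp(3Kt) * P is constant on [0,T]
  have hgd : ∀ t ∈ Set.Icc (0 : ℝ) T,
      HasDerivAt (fun s => Real.exp (3*K*s) * (ψ1 s * ψ2 s * ψ3 s)) 0 t := by
    intro t ht
    have h0 : HasDerivAt (fun s : ℝ => 3*K*s) (3*K) t := by
      simpa using (hasDerivAt_id t).const_mul (3*K)
    have he : HasDerivAt (fun s : ℝ => Real.exp (3*K*s)) (Real.exp (3*K*t) * (3*K)) t :=
      (Real.hasDerivAt_exp _).comp t h0
    exact hasDerivAt_of_eq (he.mul (hPd t ht)) (by ring)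
  have hconst : ∀ t ∈ Set.Icc (0 : ℝ) T,
      Real.exp (3*K*t) * (ψ1 t * ψ2 t * ψ3 t) = Real.exp (3*K*0) * (ψ1 0 * ψ2 0 * ψ3 0) := by
    refine constant_of_has_deriv_right_zero ?_ ?_
    · exact fun s hs => (hgd s hs).continuousAt.continuousWithinAt
    · exact fun s hs => ((hgd s (Set.Ico_subset_Icc_self hs)).hasDerivWithinAt)
  have hmain : ∀ t ∈ Set.Icc (0 : ℝ) T, ψamp t = Real.exp (-K * t) * ψamp 0 := by
    intro t ht
    have h := hconst t ht
    rw [mul_zero, Real.exp_zero, one_mul] at h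
    have hPt : ψ1 t * ψ2 t * ψ3 t = Real.exp (-(3*K*t)) * (ψ1 0 * ψ2 0 * ψ3 0) := by
      rw [eq_comm, ← h, Real.exp_neg, ← mul_assoc, inv_mul_cancel₀ (Real.exp_ne_zero _), one_mul]
    rw [hψamp t, hψamp 0, hPt, abs_mul, abs_of_pos (Real.exp_pos _),
      Real.mul_rpow (Real.exp_pos _).le (abs_nonneg _)]
    have hee : Real.exp (-(3*K*t)) ^ ((1 : ℝ)/3) = Real.exp (-K * t) := by
      rw [← Real.exp_mul]
      congr 1
      ring
    rw [hee]
  refine ⟨hmain, fun hK => ?_⟩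
  intro s hs t ht hst
  rw [hmain s hs, hmain t ht]
  have h0 : (0:ℝ) ≤ ψamp 0 := by
    rw [hψamp 0]; exact Real.rpow_nonneg (abs_nonneg _) _
  have hle : Real.exp (-K * t) ≤ Real.exp (-K * s) := by
    apply Real.exp_le_exp.mpr
    nlinarith
  exact mul_le_mul_of_nonneg_right hle h0
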